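/- Let ℍ ⊆ Bor(C) be a finite Boolean subalgebra that is (n,ε)-balanced for some n ∈ ℕ and 0 < ε < 1/3. Then the map h_n : ℍ → 𝔸_n defined by h_n(A) = ⋃{⟨s⟩ : s ∈ {-1,1}^n, λ(⟨s⟩\A)/λ(⟨s⟩) < ε} is a homomorphism of Boolean algebras, and for every A ∈ ℍ, λ(A △ h_n(A)) < ε/n. -/

import Mathlib

open MeasureTheory Set Filter Topology
open scoped ENNReal

noncomputable section

/-- The Cantor set `{-1,1}^ℕ`, coded with `Bool` (`true ↔ 1`, `false ↔ -1`). -/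
abbrev Cantor : Type := ℕ → Bool

/-- `δ_n(x) = x_n ∈ {-1,1}`. -/
def delta (n : ℕ) (x : Cantor) : ℝ := if x n then 1 else -1

/-- The cylinder `⟨s⟩ = {x : x↾m = s}`. -/
def cyl {m : ℕ} (s : Fin m → Bool) : Set Cantor := {x | ∀ i : Fin m, x i.1 = s i}

/-- `φ_n(A) = ∫_A δ_n dμ`. -/
def phi (μ : Measure Cantor) (n : ℕ) (A : Set Cantor) : ℝ := ∫ x in A, delta n x ∂μ

/-- `μ` is the Haar (fair-coin product) measure on the Cantor set:
every cylinder of length `m` has measure `2^{-m}`. -/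
def IsHaar (μ : Measure Cantor) : Prop :=
  ∀ (m : ℕ) (s : Fin m → Bool), μ (cyl s) = (2 : ℝ≥0∞)⁻¹ ^ m

/-- `A` is `(t,ε)`-semibalanced: `|φ_r(A)| < ε/r` for all `r > t`. -/
def Semibalanced (μ : Measure Cantor) (t : ℕ) (ε : ℝ) (A : Set Cantor) : Prop :=
  ∀ r : ℕ, t < r → |phi μ r A| < ε / (r : ℝ)

/-- `A` is `(m,ε)`-balanced. -/
def BalancedAt (μ : Measure Cantor) (m : ℕ) (ε : ℝ) (A : Set Cantor) : Prop :=
  ∀ s : Fin m → Bool,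
    ((μ (A ∩ cyl s)).toReal / (μ (cyl s)).toReal < ε / (m : ℝ) ∨
      (μ (cyl s \ A)).toReal / (μ (cyl s)).toReal < ε / (m : ℝ)) ∧
    ∀ r : ℕ, m < r → |phi μ r (A ∩ cyl s)| / (μ (cyl s)).toReal < ε / (r : ℝ)

/-- `A` is `(m,t,ε)`-balanced. -/
def BalancedAtT (μ : Measure Cantor) (m t : ℕ) (ε : ℝ) (A : Set Cantor) : Prop :=
  ∀ s : Fin m → Bool,
    ((μ (A ∩ cyl s)).toReal / (μ (cyl s)).toReal < ε / (m : ℝ) ∨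
      (μ (cyl s \ A)).toReal / (μ (cyl s)).toReal < ε / (m : ℝ)) ∧
    ∀ r : ℕ, m < r → r ≤ t → |phi μ r (A ∩ cyl s)| / (μ (cyl s)).toReal < ε / (r : ℝ)

/-- The approximation map `h_n : ℍ → 𝔸_n`,
`h_n(A) = ⋃{⟨s⟩ : λ(⟨s⟩ \ A)/λ(⟨s⟩) < ε}`. -/
def hmap (μ : Measure Cantor) (n : ℕ) (ε : ℝ) (A : Set Cantor) : Set Cantor :=
  ⋃ s ∈ {s : Fin n → Bool | (μ (cyl s \ A)).toReal / (μ (cyl s)).toReal < ε}, cyl s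

lemma cyl_measurable {m : ℕ} (s : Fin m → Bool) : MeasurableSet (cyl s) := by
  have h : cyl s = ⋂ i : Fin m, (fun x : Cantor => x i.1) ⁻¹' {s i} := by
    ext x; simp [cyl]
  rw [h]
  exact MeasurableSet.iInter fun i => (measurable_pi_apply _) (measurableSet_singleton _)

lemma cyl_disjoint {m : ℕ} {s t : Fin m → Bool} (h : s ≠ t) : Disjoint (cyl s) (cyl t) := by
  rw [Set.disjoint_left]
  intro x hs ht
  exact h (funext fun i => (hs i).symm.trans (ht i))

lemma mem_hmap_iff (μ : Measure Cantor) (n : ℕ) (ε : ℝ) (A : Set Cantor) (x : Cantor) :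
    x ∈ hmap μ n ε A ↔
      (μ (cyl (fun i : Fin n => x i.1) \ A)).toReal /
        (μ (cyl (fun i : Fin n => x i.1))).toReal < ε := by
  constructor
  · intro hx
    simp only [hmap, mem_iUnion, mem_setOf_eq] at hx
    obtain ⟨s, hs, hxs⟩ := hx
    rwa [show (fun i : Fin n => x i.1) = s from funext fun i => hxs i]
  · intro h
    simp only [hmap, mem_iUnion, mem_setOf_eq]
    exact ⟨_, h, fun i => rfl⟩

lemma hmap_measurable (μ : Measure Cantor) (n : ℕ) (ε : ℝ) (A : Set Cantor) :
    MeasurableSet (hmap μ n ε A) :=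
  MeasurableSet.biUnion (Set.to_countable _) fun s _ => cyl_measurable s

/-- On a finite `(n,ε)`-balanced subalgebra (with `0 < ε < 1/3`), `h_n` is a Boolean
homomorphism into `𝔸_n` and `λ(A △ h_n(A)) < ε/n` for every `A` in the algebra. -/
theorem stmt7 (μ : Measure Cantor) [IsProbabilityMeasure μ] (hμ : IsHaar μ)
    (H : Set (Set Cantor)) (hfin : H.Finite)
    (huniv : Set.univ ∈ H) (hcompl : ∀ A ∈ H, Aᶜ ∈ H)
    (hunion : ∀ A ∈ H, ∀ B ∈ H, A ∪ B ∈ H)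
    (hmeas : ∀ A ∈ H, MeasurableSet A)
    (n : ℕ) (hn : 0 < n) (ε : ℝ) (hε0 : 0 < ε) (hε : ε < 1 / 3)
    (hbal : ∀ A ∈ H, BalancedAt μ n ε A) :
    hmap μ n ε Set.univ = Set.univ ∧
    (∀ A ∈ H, ∀ B ∈ H, hmap μ n ε (A ∪ B) = hmap μ n ε A ∪ hmap μ n ε B) ∧
    (∀ A ∈ H, hmap μ n ε Aᶜ = (hmap μ n ε A)ᶜ) ∧
    (∀ A ∈ H, (μ (symmDiff A (hmap μ n ε A))).toReal < ε / n) := by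
  have hn1 : (1:ℝ) ≤ n := by exact_mod_cast hn
  have hnpos : (0:ℝ) < n := by exact_mod_cast hn
  have hεn : ε / n ≤ ε := div_le_self hε0.le hn1
  have hεnpos : 0 < ε / n := div_pos hε0 hnpos
  have hm : ∀ s : Fin n → Bool, (μ (cyl s)).toReal = (1/2:ℝ)^n := by
    intro s
    rw [hμ n s]
    simp
  have hmpos : (0:ℝ) < (1/2:ℝ)^n := by positivity
  -- the sum rule on a cylinder
  have hdc : ∀ A : Set Cantor, MeasurableSet A → ∀ s : Fin n → Bool,
      (μ (A ∩ cyl s)).toReal + (μ (cyl s \ A)).toReal = (1/2:ℝ)^n := by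
    intro A hA s
    rw [← hm s, ← ENNReal.toReal_add (measure_ne_top μ _) (measure_ne_top μ _),
      inter_comm, measure_inter_add_diff _ hA]
  -- membership in `hmap` in multiplied form
  have hmem : ∀ (A : Set Cantor) (x : Cantor),
      x ∈ hmap μ n ε A ↔
        (μ (cyl (fun i : Fin n => x i.1) \ A)).toReal < ε * (1/2:ℝ)^n := by
    intro A x
    rw [mem_hmap_iff, hm, div_lt_iff₀ hmpos]
  -- balance in multiplied form
  have hbal' : ∀ A ∈ H, ∀ s : Fin n → Bool,
      (μ (A ∩ cyl s)).toReal < ε / n * (1/2:ℝ)^n ∨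
      (μ (cyl s \ A)).toReal < ε / n * (1/2:ℝ)^n := by
    intro A hA s
    rcases (hbal A hA s).1 with h | h
    · left; rwa [hm, div_lt_iff₀ hmpos] at h
    · right; rwa [hm, div_lt_iff₀ hmpos] at h
  -- Part 1
  have part1 : hmap μ n ε Set.univ = Set.univ := by
    refine eq_univ_of_forall fun x => ?_
    rw [hmem]
    simp only [diff_univ, measure_empty, ENNReal.toReal_zero]
    positivity
  -- Part 2
  have part2 : ∀ A ∈ H, ∀ B ∈ H, hmap μ n ε (A ∪ B) = hmap μ n ε A ∪ hmap μ n ε B := by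
    intro A hA B hB
    ext x
    set s : Fin n → Bool := fun i : Fin n => x i.1 with hs
    rw [mem_union, hmem, hmem, hmem]
    constructor
    · intro h
      by_contra hcon
      push_neg at hcon
      obtain ⟨h1, h2⟩ := hcon
      have bA : (μ (A ∩ cyl s)).toReal < ε / n * (1/2:ℝ)^n := by
        rcases hbal' A hA s with hh | hh
        · exact hh
        · exact absurd (hh.trans_le (by nlinarith)) (not_lt.2 h1)
      have bB : (μ (B ∩ cyl s)).toReal < ε / n * (1/2:ℝ)^n := by
        rcases hbal' B hB s with hh | hh
        · exact hh
        · exact absurd (hh.trans_le (by nlinarith)) (not_lt.2 h2)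
      have hsum : (μ ((A ∪ B) ∩ cyl s)).toReal
          ≤ (μ (A ∩ cyl s)).toReal + (μ (B ∩ cyl s)).toReal := by
        rw [← ENNReal.toReal_add (measure_ne_top μ _) (measure_ne_top μ _)]
        refine ENNReal.toReal_mono (ENNReal.add_ne_top.2
          ⟨measure_ne_top μ _, measure_ne_top μ _⟩) ?_
        rw [union_inter_distrib_right]
        exact measure_union_le _ _
      have hABdc := hdc (A ∪ B) ((hmeas A hA).union (hmeas B hB)) s
      nlinarith [mul_le_mul_of_nonneg_right hεn hmpos.le]
    · intro h
      rcases h with h | h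
      · refine lt_of_le_of_lt ?_ h
        exact ENNReal.toReal_mono (measure_ne_top μ _)
          (measure_mono (diff_subset_diff_right subset_union_left))
      · refine lt_of_le_of_lt ?_ h
        exact ENNReal.toReal_mono (measure_ne_top μ _)
          (measure_mono (diff_subset_diff_right subset_union_right))
  -- Part 3
  have part3 : ∀ A ∈ H, hmap μ n ε Aᶜ = (hmap μ n ε A)ᶜ := by
    intro A hA
    ext x
    set s : Fin n → Bool := fun i : Fin n => x i.1 with hs
    rw [mem_compl_iff, hmem, hmem, not_lt]
    have hrw : cyl s \ Aᶜ = A ∩ cyl s := by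
      ext y; simp [and_comm]
    rw [hrw]
    have hsum := hdc A (hmeas A hA) s
    constructor
    · intro h
      nlinarith
    · intro h
      rcases hbal' A hA s with hh | hh
      · exact hh.trans_le (by nlinarith)
      · exact absurd h (not_le.2 (hh.trans_le (by nlinarith)))
  -- Part 4
  refine ⟨part1, part2, part3, ?_⟩
  intro A hA
  have hAm : MeasurableSet A := hmeas A hA
  have hDm : MeasurableSet (symmDiff A (hmap μ n ε A)) :=
    hAm.symmDiff (hmap_measurable μ n ε A)
  -- decompose over cylinders
  have cover : μ (symmDiff A (hmap μ n ε A))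
      = ∑ s : Fin n → Bool, μ (symmDiff A (hmap μ n ε A) ∩ cyl s) := by
    have hU : symmDiff A (hmap μ n ε A)
        = ⋃ s : Fin n → Bool, symmDiff A (hmap μ n ε A) ∩ cyl s := by
      ext x
      simp only [mem_iUnion, mem_inter_iff]
      constructor
      · intro hx; exact ⟨fun i : Fin n => x i.1, hx, fun i => rfl⟩
      · rintro ⟨t, hx, _⟩; exact hx
    have hdisj : Pairwise (Function.onFun Disjoint fun t : Fin n → Bool =>
        symmDiff A (hmap μ n ε A) ∩ cyl t) := fun u v huv =>
      (cyl_disjoint huv).mono inter_subset_right inter_subset_right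
    calc μ (symmDiff A (hmap μ n ε A))
        = μ (⋃ s : Fin n → Bool, symmDiff A (hmap μ n ε A) ∩ cyl s) := by
          conv_lhs => rw [hU]
      _ = ∑' s : Fin n → Bool, μ (symmDiff A (hmap μ n ε A) ∩ cyl s) :=
          measure_iUnion hdisj (fun t => hDm.inter (cyl_measurable t))
      _ = ∑ s : Fin n → Bool, μ (symmDiff A (hmap μ n ε A) ∩ cyl s) := tsum_fintype _
  -- per-cylinder bound
  have key : ∀ s : Fin n → Bool,
      (μ (symmDiff A (hmap μ n ε A) ∩ cyl s)).toReal < ε / n * (1/2:ℝ)^n := by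
    intro s
    have hsx : ∀ x ∈ cyl s, (fun i : Fin n => x i.1) = s := by
      intro x hx; exact funext fun i => hx i
    have hsum := hdc A hAm s
    by_cases hc : (μ (cyl s \ A)).toReal < ε * (1/2:ℝ)^n
    · -- cyl s ⊆ hmap; the symmetric difference there is `cyl s \ A`
      have hsub : symmDiff A (hmap μ n ε A) ∩ cyl s ⊆ cyl s \ A := by
        rintro x ⟨hxd, hxs⟩
        rcases Set.mem_symmDiff.1 hxd with ⟨_, hnh⟩ | ⟨_, hna⟩
        · exact absurd ((hmem A x).2 (by rw [hsx x hxs]; exact hc)) hnh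
        · exact ⟨hxs, hna⟩
      have hle : (μ (symmDiff A (hmap μ n ε A) ∩ cyl s)).toReal
          ≤ (μ (cyl s \ A)).toReal :=
        ENNReal.toReal_mono (measure_ne_top μ _) (measure_mono hsub)
      have hc' : (μ (cyl s \ A)).toReal < ε / n * (1/2:ℝ)^n := by
        rcases hbal' A hA s with hh | hh
        · exfalso
          have : ε / n * (1/2:ℝ)^n ≤ ε * (1/2:ℝ)^n :=
            mul_le_mul_of_nonneg_right hεn hmpos.le
          nlinarith
        · exact hh
      exact hle.trans_lt hc'
    · -- cyl s misses hmap; the symmetric difference there is `A ∩ cyl s`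
      have hsub : symmDiff A (hmap μ n ε A) ∩ cyl s ⊆ A ∩ cyl s := by
        rintro x ⟨hxd, hxs⟩
        rcases Set.mem_symmDiff.1 hxd with ⟨ha, _⟩ | ⟨hh, _⟩
        · exact ⟨ha, hxs⟩
        · exact absurd ((hmem A x).1 hh) (by rw [hsx x hxs]; exact hc)
      have hle : (μ (symmDiff A (hmap μ n ε A) ∩ cyl s)).toReal
          ≤ (μ (A ∩ cyl s)).toReal :=
        ENNReal.toReal_mono (measure_ne_top μ _) (measure_mono hsub)
      have hd' : (μ (A ∩ cyl s)).toReal < ε / n * (1/2:ℝ)^n := by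
        rcases hbal' A hA s with hh | hh
        · exact hh
        · exfalso
          have : ε / n * (1/2:ℝ)^n ≤ ε * (1/2:ℝ)^n :=
            mul_le_mul_of_nonneg_right hεn hmpos.le
          exact hc (hh.trans_le this)
      exact hle.trans_lt hd'
  -- sum up
  have htr : (μ (symmDiff A (hmap μ n ε A))).toReal
      = ∑ s : Fin n → Bool, (μ (symmDiff A (hmap μ n ε A) ∩ cyl s)).toReal := by
    rw [cover, ENNReal.toReal_sum]
    exact fun s _ => measure_ne_top μ _
  rw [htr]
  calc ∑ s : Fin n → Bool, (μ (symmDiff A (hmap μ n ε A) ∩ cyl s)).toReal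
      < ∑ _s : Fin n → Bool, ε / n * (1/2:ℝ)^n :=
        Finset.sum_lt_sum_of_nonempty Finset.univ_nonempty (fun s _ => key s)
    _ = ε / n := by
        rw [Finset.sum_const, Finset.card_univ, nsmul_eq_mul]
        have hcard : (Fintype.card (Fin n → Bool) : ℝ) = 2 ^ n := by
          simp [Fintype.card_fun]
        rw [hcard]
        rw [div_pow, one_pow]
        field_simp
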